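/- Let N be compact and Σ controllable, and suppose there exist x ∈ N and S > 0 such that x ∈ A(x, τ) for every τ ≥ S. Then Σ is exact time controllable at every time t ≥ S + 2T, where T is a time realizing finite time controllability. -/

import Mathlib

open Set Manifold

/-- An abstract smooth control system `ẋ = f(x,u)` on a manifold `N` modelled on `(E,H)` via `I`,
with control set `U`.  `f u` is the vector field corresponding to the constant control `u`
(smooth, as part of the data), and `A x t` is the attainable set from `x` at exact time `t`
(for the chosen class of admissible inputs, which contains the constant inputs and is stable
under concatenation; this is reflected in the axioms `mem_zero` and `concat`). -/
structure ControlSystem {E : Type*} [NormedAddCommGroup E] [NormedSpace ℝ E]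
    {H : Type*} [TopologicalSpace H] (I : ModelWithCorners ℝ E H)
    (N : Type*) [TopologicalSpace N] [ChartedSpace H N] [IsManifold I (⊤ : ℕ∞) N]
    (U : Type*) where
  f : U → (x : N) → TangentSpace I x
  smooth : ∀ u, ContMDiff I I.tangent (⊤ : ℕ∞) (fun x => (⟨x, f u x⟩ : TangentBundle I N))
  A : N → ℝ → Set N
  mem_zero : ∀ x, x ∈ A x 0
  concat : ∀ {x y z : N} {s t : ℝ}, 0 ≤ s → 0 ≤ t → y ∈ A x s → z ∈ A y t → z ∈ A x (s + t)

namespace ControlSystem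

variable {E : Type*} [NormedAddCommGroup E] [NormedSpace ℝ E]
    {H : Type*} [TopologicalSpace H] {I : ModelWithCorners ℝ E H}
    {N : Type*} [TopologicalSpace N] [ChartedSpace H N] [IsManifold I (⊤ : ℕ∞) N] {U : Type*}

/-- Points attainable from `x` in time at most `t`. -/
def Ale (σ : ControlSystem I N U) (x : N) (t : ℝ) : Set N := ⋃ s ∈ Icc (0:ℝ) t, σ.A x s

/-- Exact-time attainable set of the time-reversed system: points that can be steered to `x`
in time exactly `t`. -/
def Arev (σ : ControlSystem I N U) (x : N) (t : ℝ) : Set N := {y | x ∈ σ.A y t}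

/-- Every point can be steered to every point in some finite time. -/
def Controllable (σ : ControlSystem I N U) : Prop := ∀ x y : N, ∃ t ≥ (0:ℝ), y ∈ σ.A x t

def FiniteTimeControllable (σ : ControlSystem I N U) : Prop :=
  ∃ T > (0:ℝ), ∀ x, σ.Ale x T = univ

def ExactTimeControllable (σ : ControlSystem I N U) : Prop :=
  ∃ t₀ > (0:ℝ), ∀ t ≥ t₀, ∀ x, σ.A x t = univ

end ControlSystem

/-- On a compact manifold, if `x ∈ A(x,τ)` for every `τ ≥ S` and `T` realizes
finite time controllability, then the system is exact time controllable at every `t ≥ S + 2T`. -/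
theorem exact_time_controllable_of_self_reachable {E : Type*} [NormedAddCommGroup E] [NormedSpace ℝ E]
    {H : Type*} [TopologicalSpace H] {I : ModelWithCorners ℝ E H}
    {N : Type*} [TopologicalSpace N] [ChartedSpace H N] [IsManifold I (⊤ : ℕ∞) N]
    [CompactSpace N] [ConnectedSpace N] {U : Type*}
    (σ : ControlSystem I N U) (hc : σ.Controllable)
    (x : N) (S : ℝ) (hS : 0 < S) (hx : ∀ τ ≥ S, x ∈ σ.A x τ)
    (T : ℝ) (hT : 0 < T) (hTC : ∀ y : N, σ.Ale y T = Set.univ) :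
    ∀ t ≥ S + 2 * T, ∀ y : N, σ.A y t = Set.univ := by
  intro t ht y
  ext z
  simp only [Set.mem_univ, iff_true]
  have h1 : x ∈ σ.Ale y T := by rw [hTC y]; trivial
  have h2 : z ∈ σ.Ale x T := by rw [hTC x]; trivial
  obtain ⟨t₁, ht₁, hxy⟩ := Set.mem_iUnion₂.1 h1
  obtain ⟨t₂, ht₂, hzx⟩ := Set.mem_iUnion₂.1 h2
  set τ := t - t₁ - t₂ with hτ
  have hτS : S ≤ τ := by
    have a := ht₁.2; have b := ht₂.2; rw [hτ]; linarith
  have hτ0 : 0 ≤ τ := le_trans hS.le hτS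
  have hxx : x ∈ σ.A x τ := hx τ hτS
  have := σ.concat (s := t₁ + τ) (t := t₂) (by linarith [ht₁.1]) ht₂.1
    (σ.concat ht₁.1 hτ0 hxy hxx) hzx
  have heq : t₁ + τ + t₂ = t := by simp [hτ]; ring
  rwa [heq] at this
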